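/- The only pairs of coprime positive integers (x, y) with x² + 3^α·113^β = y³ for non-negative integers α ≤ 5 with β = 0 are (x, y, α) = (46, 13, 4) and (10, 7, 5). -/

import Mathlib

/-- Eisenstein integers: `re + im * ω` where `ω² + ω + 1 = 0`. -/
@[ext]
structure Eis where
  re : ℤ
  im : ℤ
  deriving DecidableEq

namespace Eis

instance : Zero Eis := ⟨⟨0, 0⟩⟩
instance : One Eis := ⟨⟨1, 0⟩⟩
instance : Add Eis := ⟨fun z w => ⟨z.1 + w.1, z.2 + w.2⟩⟩
instance : Neg Eis := ⟨fun z => ⟨-z.1, -z.2⟩⟩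
instance : Mul Eis := ⟨fun z w => ⟨z.1 * w.1 - z.2 * w.2, z.1 * w.2 + z.2 * w.1 - z.2 * w.2⟩⟩

@[simp] theorem zero_re : (0 : Eis).re = 0 := rfl
@[simp] theorem zero_im : (0 : Eis).im = 0 := rfl
@[simp] theorem one_re : (1 : Eis).re = 1 := rfl
@[simp] theorem one_im : (1 : Eis).im = 0 := rfl
@[simp] theorem add_re (z w : Eis) : (z + w).re = z.re + w.re := rfl
@[simp] theorem add_im (z w : Eis) : (z + w).im = z.im + w.im := rfl
@[simp] theorem neg_re (z : Eis) : (-z).re = -z.re := rfl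
@[simp] theorem neg_im (z : Eis) : (-z).im = -z.im := rfl
@[simp] theorem mul_re (z w : Eis) : (z * w).re = z.re * w.re - z.im * w.im := rfl
@[simp] theorem mul_im (z w : Eis) :
    (z * w).im = z.re * w.im + z.im * w.re - z.im * w.im := rfl

instance addCommGroup : AddCommGroup Eis := by
  refine
  { add := (· + ·)
    zero := (0 : Eis)
    sub := fun a b => a + -b
    neg := Neg.neg
    nsmul := @nsmulRec Eis ⟨0⟩ ⟨(· + ·)⟩
    zsmul := @zsmulRec Eis ⟨0⟩ ⟨(· + ·)⟩ ⟨Neg.neg⟩ (@nsmulRec Eis ⟨0⟩ ⟨(· + ·)⟩)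
    add_assoc := ?_
    zero_add := ?_
    add_zero := ?_
    neg_add_cancel := ?_
    add_comm := ?_ } <;>
  intros <;>
  ext <;>
  simp [add_comm, add_left_comm]

@[simp] theorem sub_re (z w : Eis) : (z - w).re = z.re - w.re := rfl
@[simp] theorem sub_im (z w : Eis) : (z - w).im = z.im - w.im := rfl

instance addGroupWithOne : AddGroupWithOne Eis :=
  { Eis.addCommGroup with
    natCast := fun n => ⟨n, 0⟩
    intCast := fun n => ⟨n, 0⟩
    one := 1 }

instance commRing : CommRing Eis := by
  refine
  { Eis.addGroupWithOne with
    mul := (· * ·)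
    npow := @npowRec Eis ⟨1⟩ ⟨(· * ·)⟩,
    add_comm := ?_
    left_distrib := ?_
    right_distrib := ?_
    zero_mul := ?_
    mul_zero := ?_
    mul_assoc := ?_
    one_mul := ?_
    mul_one := ?_
    mul_comm := ?_ } <;>
  intros <;>
  ext <;>
  simp <;>
  ring

@[simp] theorem natCast_re (n : ℕ) : (n : Eis).re = n := rfl
@[simp] theorem natCast_im (n : ℕ) : (n : Eis).im = 0 := rfl
@[simp] theorem intCast_re (n : ℤ) : (n : Eis).re = n := rfl
@[simp] theorem intCast_im (n : ℤ) : (n : Eis).im = 0 := rfl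

/-- The norm `a² - ab + b²`. -/
def norm (z : Eis) : ℤ := z.re * z.re - z.re * z.im + z.im * z.im

theorem norm_mul (z w : Eis) : norm (z * w) = norm z * norm w := by
  simp [norm]; ring

theorem norm_nonneg (z : Eis) : 0 ≤ norm z := by
  have h : 4 * norm z = (2*z.re - z.im)^2 + 3 * z.im^2 := by simp [norm]; ring
  nlinarith [sq_nonneg (2*z.re - z.im), sq_nonneg z.im]

theorem norm_eq_zero_iff (z : Eis) : norm z = 0 ↔ z = 0 := by
  constructor
  · intro h
    have h4 : (2*z.re - z.im)^2 + 3 * z.im^2 = 0 := by simp [norm] at h; nlinarith [h]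
    have h1 : z.im = 0 := by nlinarith [sq_nonneg (2*z.re - z.im), sq_nonneg z.im]
    have h2 : z.re = 0 := by nlinarith [sq_nonneg (2*z.re - z.im)]
    ext <;> simp [h1, h2]
  · rintro rfl; simp [norm]

theorem norm_pos (z : Eis) (hz : z ≠ 0) : 0 < norm z := by
  rcases lt_or_eq_of_le (norm_nonneg z) with h | h
  · exact h
  · exact absurd ((norm_eq_zero_iff z).1 h.symm) hz

instance : Nontrivial Eis := ⟨⟨0, 1, by decide⟩⟩

end Eis

namespace Eis

/-- Conjugate. -/
def conj (z : Eis) : Eis := ⟨z.re - z.im, -z.im⟩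

theorem mul_conj (z : Eis) : z * conj z = (⟨norm z, 0⟩ : Eis) := by
  ext <;> simp [conj, norm] <;> ring

/-- Nearest-integer division. -/
def ediv2 (x n : ℤ) : ℤ := (2*x + n) / (2*n)

theorem ediv2_spec (x n : ℤ) (hn : 0 < n) :
    -n ≤ 2*(x - ediv2 x n * n) ∧ 2*(x - ediv2 x n * n) < n := by
  have h2n : (0:ℤ) < 2*n := by omega
  have hdm := Int.mul_ediv_add_emod (2*x + n) (2*n)
  have hr1 := Int.emod_nonneg (2*x + n) (by omega : (2*n) ≠ 0)
  have hr2 := Int.emod_lt_of_pos (2*x + n) h2n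
  unfold ediv2
  set q := (2*x + n) / (2*n) with hq
  set r := (2*x + n) % (2*n) with hr
  constructor <;> nlinarith [hdm, hr1, hr2]

instance : Div Eis :=
  ⟨fun z w => ⟨ediv2 (z * conj w).re (norm w), ediv2 (z * conj w).im (norm w)⟩⟩

theorem div_def (z w : Eis) :
    z / w = ⟨ediv2 (z * conj w).re (norm w), ediv2 (z * conj w).im (norm w)⟩ := rfl

instance : Mod Eis := ⟨fun x y => x - y * (x / y)⟩

theorem mod_def (x y : Eis) : x % y = x - y * (x / y) := rfl

theorem norm_mod_lt (z : Eis) {w : Eis} (hw : w ≠ 0) : (z % w).norm < w.norm := by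
  have hn : 0 < norm w := norm_pos w hw
  set n := norm w with hnn
  set q : Eis := z / w with hqq
  set c : Eis := z * conj w with hcc
  have hu := ediv2_spec c.re n hn
  have hv := ediv2_spec c.im n hn
  have hqre : q.re = ediv2 c.re n := rfl
  have hqim : q.im = ediv2 c.im n := rfl
  set u : ℤ := c.re - q.re * n with huu
  set v : ℤ := c.im - q.im * n with hvv
  have hu' : -n ≤ 2*u ∧ 2*u < n := by rw [huu, hqre]; exact hu
  have hv' : -n ≤ 2*v ∧ 2*v < n := by rw [hvv, hqim]; exact hv
  have key : (z - w * q) * conj w = (⟨u, v⟩ : Eis) := by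
    have hc : c = z * conj w := rfl
    have hwc : w * conj w = (⟨n, 0⟩ : Eis) := mul_conj w
    have expand : (z - w * q) * conj w = z * conj w - (w * conj w) * q := by ring
    rw [expand, hwc]
    ext
    · simp [huu, hcc]; ring
    · simp [hvv, hcc]; ring
  have hnorm : norm (z - w * q) * n = u^2 - u*v + v^2 := by
    have h1 := norm_mul (z - w * q) (conj w)
    rw [key] at h1
    have h2 : norm (conj w) = n := by simp [conj, norm, hnn]; ring
    rw [h2] at h1
    simp [norm] at h1 ⊢
    linarith [h1]
  have hU : (2*u)^2 ≤ n^2 := by nlinarith [hu'.1, hu'.2]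
  have hV : (2*v)^2 ≤ n^2 := by nlinarith [hv'.1, hv'.2]
  have hmod : z % w = z - w * q := rfl
  rw [hmod]
  nlinarith [hnorm, hU, hV, sq_nonneg (2*u - 2*v), hn, norm_nonneg (z - w * q)]

theorem natAbs_norm_mod_lt (x : Eis) {y : Eis} (hy : y ≠ 0) :
    (x % y).norm.natAbs < y.norm.natAbs :=
  Int.natAbs_lt_natAbs_of_nonneg_of_lt (norm_nonneg _) (norm_mod_lt x hy)

theorem quotient_mul_add_remainder (x y : Eis) : y * (x / y) + x % y = x := by
  rw [mod_def]; ring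

instance : EuclideanDomain Eis :=
  { Eis.commRing, (inferInstance : Nontrivial Eis) with
    quotient := (· / ·)
    remainder := (· % ·)
    quotient_zero := fun z => by
      ext <;> simp [div_def, conj, ediv2, norm]
    quotient_mul_add_remainder_eq := quotient_mul_add_remainder
    r := fun a b => a.norm.natAbs < b.norm.natAbs
    r_wellFounded := (measure fun z : Eis => z.norm.natAbs).wf
    remainder_lt := natAbs_norm_mod_lt
    mul_left_not_lt := fun a b hb0 => by
      apply not_lt_of_ge
      rw [norm_mul, Int.natAbs_mul]
      exact Nat.le_mul_of_pos_right _
        (Int.natAbs_pos.2 (by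
          intro h
          exact hb0 ((norm_eq_zero_iff b).1 h)))
  }

end Eis

lemma int_cube_inj (a b : ℤ) (h : a^3 = b^3) : a = b := by
  have h0 : (a - b) * (a^2 + a*b + b^2) = 0 := by linear_combination h
  rcases mul_eq_zero.1 h0 with h1 | h1
  · linarith
  · have hb : b = 0 := by nlinarith [sq_nonneg (2*a+b), sq_nonneg (a+2*b), sq_nonneg (a-b)]
    have ha : a = 0 := by nlinarith [sq_nonneg (2*a+b)]
    rw [ha, hb]

namespace Eis

lemma pow3_re (d : Eis) : (d^3).re = d.re^3 + d.im^3 - 3*d.re*d.im^2 := by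
  have h : d^3 = d*d*d := by ring
  rw [h]
  simp [mul_re, mul_im]; ring

lemma pow3_im (d : Eis) : (d^3).im = 3*d.re^2*d.im - 3*d.re*d.im^2 := by
  have h : d^3 = d*d*d := by ring
  rw [h]
  simp [mul_re, mul_im]; ring

end Eis

lemma eis_key (x y : ℤ) (h : x^2 + 243 = y^3) (hcop : IsCoprime (y^3) (972:ℤ))
    (h3y : ¬ (3:ℤ) ∣ y) :
    ∃ a b : ℤ, x + 9 = a^3 + b^3 - 3*a*b^2 ∧ 18 = 3*a^2*b - 3*a*b^2 := by
  classical
  letI : GCDMonoid Eis := EuclideanDomain.gcdMonoid _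
  set p : Eis := ⟨x+9, 18⟩ with hp
  set q : Eis := ⟨x-9, -18⟩ with hq
  have hcast : ∀ n : ℤ, ((n : ℤ) : Eis) = ⟨n, 0⟩ := fun n => by
    ext <;> simp
  have hmul0 : p * q = (⟨x^2+243, 0⟩ : Eis) := by
    ext
    · simp [hp, hq, Eis.mul_re]; ring
    · simp [hp, hq, Eis.mul_im]; ring
  have hmul : p * q = ((y : Eis))^3 := by
    rw [hmul0, h, ← hcast]; push_cast; ring
  have hco : IsCoprime p q := by
    obtain ⟨s, t, hst⟩ := hcop
    refine ⟨(s:Eis) * q - (t:Eis) * (p - q), (t:Eis) * (p - q), ?_⟩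
    have h2 : (p-q)*(p-q) = (⟨-972, 0⟩ : Eis) := by
      ext
      · simp [hp, hq, Eis.mul_re]; try ring
      · simp [hp, hq, Eis.mul_im]; try ring
    have key : ((s:Eis) * q - (t:Eis) * (p - q)) * p + ((t:Eis) * (p - q)) * q
        = (s:Eis) * (p*q) - (t:Eis) * ((p-q)*(p-q)) := by ring
    rw [key, hmul0, h, h2, ← hcast (y^3), ← hcast (-972)]
    have hc := congrArg (fun z : ℤ => (z : Eis)) hst
    push_cast at hc ⊢
    linear_combination hc
  have hgu : IsUnit (gcd p q) := hco.isUnit_of_dvd' (gcd_dvd_left p q) (gcd_dvd_right p q)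
  obtain ⟨d, hd⟩ := exists_associated_pow_of_mul_eq_pow hgu hmul
  obtain ⟨u, hu⟩ := hd
  -- hu : d^3 * u = p
  have hnormp : Eis.norm p = y^3 := by
    simp [hp, Eis.norm]; linarith [h]
  have hun : Eis.norm (u : Eis) = 1 := by
    obtain ⟨v, hv⟩ := u.isUnit.exists_right_inv
    have h1 : Eis.norm (u : Eis) * Eis.norm v = 1 := by
      rw [← Eis.norm_mul, hv]; simp [Eis.norm]
    exact Int.eq_one_of_mul_eq_one_right (Eis.norm_nonneg _) h1
  have hnormd : Eis.norm d = y := by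
    apply int_cube_inj
    have h1 : Eis.norm (d^3 * u) = Eis.norm p := by rw [hu]
    rw [Eis.norm_mul, hun, mul_one] at h1
    have h2 : Eis.norm (d^3) = (Eis.norm d)^3 := by
      have hdd : d^3 = d*d*d := by ring
      rw [hdd, Eis.norm_mul, Eis.norm_mul]; ring
    rw [h2] at h1
    rw [h1, hnormp]
  -- classify the unit
  set a0 : ℤ := (u : Eis).re with ha0
  set b0 : ℤ := (u : Eis).im with hb0
  have hun' : a0*a0 - a0*b0 + b0*b0 = 1 := hun
  have huv : (u : Eis) = ⟨a0, b0⟩ := rfl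
  have ha1 : -1 ≤ a0 ∧ a0 ≤ 1 := by
    constructor <;> nlinarith [sq_nonneg (a0 - 2*b0), sq_nonneg (a0+1), sq_nonneg (a0-1), sq_nonneg b0, sq_nonneg (a0-b0)]
  have hb1 : -1 ≤ b0 ∧ b0 ≤ 1 := by
    constructor <;> nlinarith [sq_nonneg (b0 - 2*a0), sq_nonneg (b0+1), sq_nonneg (b0-1), sq_nonneg a0, sq_nonneg (a0-b0)]
  -- the "bad unit" cases all force 3 ∣ P where P = (d^3).re
  have hbad : ¬ ((3:ℤ) ∣ (d^3).re) := by
    intro hP3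
    set a : ℤ := d.re
    set b : ℤ := d.im
    have hPval : (d^3).re = a^3 + b^3 - 3*a*b^2 := Eis.pow3_re d
    have hab : (3:ℤ) ∣ (a + b) := by
      have hgoal : ((a + b : ℤ) : ZMod 3) = 0 → (3:ℤ) ∣ (a+b) := by
        intro hh
        exact_mod_cast (ZMod.intCast_zmod_eq_zero_iff_dvd (a+b) 3).1 hh
      apply hgoal
      have h0 : (((d^3).re : ℤ) : ZMod 3) = 0 :=
        (ZMod.intCast_zmod_eq_zero_iff_dvd _ 3).2 (by exact_mod_cast hP3)
      rw [hPval] at h0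
      push_cast at h0
      have h3 : (3 : ZMod 3) = 0 := by decide
      rw [h3] at h0
      have hcube : ∀ t : ZMod 3, t^3 = t := by decide
      push_cast
      calc ((a:ZMod 3) + b) = (a:ZMod 3)^3 + (b:ZMod 3)^3 := by rw [hcube, hcube]
        _ = 0 := by linear_combination h0
    obtain ⟨c, hc⟩ := hab
    have h3n : (3:ℤ) ∣ Eis.norm d := by
      refine ⟨3*c^2 - a*b, ?_⟩
      have : Eis.norm d = (a+b)^2 - 3*(a*b) := by simp [Eis.norm]; ring
      rw [this, hc]; ring
    rw [hnormd] at h3n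
    exact h3y h3n
  -- now case on the unit
  have hQ3 : (3:ℤ) ∣ (d^3).im := by
    rw [Eis.pow3_im]
    exact ⟨d.re^2*d.im - d.re*d.im^2, by ring⟩
  have hpre : p.re = x + 9 := rfl
  have hpim : p.im = 18 := rfl
  have hmain : ∀ c : Eis, p = c^3 →
      ∃ a b : ℤ, x + 9 = a^3 + b^3 - 3*a*b^2 ∧ 18 = 3*a^2*b - 3*a*b^2 := by
    intro c hc
    refine ⟨c.re, c.im, ?_, ?_⟩
    · have := congrArg Eis.re hc
      rw [hpre, Eis.pow3_re] at this
      linarith [this]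
    · have := congrArg Eis.im hc
      rw [hpim, Eis.pow3_im] at this
      have e : 3*c.re^2*c.im - 3*c.re*c.im^2 = 3*c.re^2*c.im - 3*c.re*c.im^2 := rfl
      linarith [this]
  have hcases : (a0 = 1 ∧ b0 = 0) ∨ (a0 = -1 ∧ b0 = 0) ∨ (a0 = 0 ∧ b0 = 1) ∨ (a0 = 0 ∧ b0 = -1)
      ∨ (a0 = 1 ∧ b0 = 1) ∨ (a0 = -1 ∧ b0 = -1) := by
    rcases ha1 with ⟨h1, h2⟩; rcases hb1 with ⟨h3, h4⟩
    interval_cases a0 <;> interval_cases b0 <;> omega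
  have hpcomp : p = (⟨(d^3).re, (d^3).im⟩ : Eis) * ⟨a0, b0⟩ := by
    rw [← hu, huv]
    try rfl
  rcases hcases with h' | h' | h' | h' | h' | h'
  · -- u = 1 : p = d^3
    apply hmain d
    rw [← hu, huv, h'.1, h'.2]
    try (have e1 : (⟨1,0⟩ : Eis) = 1 := by ext <;> simp
         rw [e1, mul_one])
  · -- u = -1 : p = (-d)^3
    apply hmain (-d)
    rw [← hu, huv, h'.1, h'.2]
    have e1 : (⟨-1,0⟩ : Eis) = -1 := by ext <;> simp
    rw [e1]; ring
  · -- u = ω : p.im = P - Q where P ≡ 0 requires 3 ∣ P ; contradiction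
    exfalso
    apply hbad
    have him := congrArg Eis.im hpcomp
    rw [hpim] at him
    rw [h'.1, h'.2] at him
    simp [Eis.mul_im] at him
    -- him : 18 = (d^3).re - (d^3).im
    obtain ⟨k, hk⟩ := hQ3
    exact ⟨6 + k, by linarith [him, hk]⟩
  · exfalso
    apply hbad
    have him := congrArg Eis.im hpcomp
    rw [hpim] at him
    rw [h'.1, h'.2] at him
    simp [Eis.mul_im] at him
    obtain ⟨k, hk⟩ := hQ3
    exact ⟨-6 + k, by linarith [him, hk]⟩
  · exfalso
    apply hbad
    have him := congrArg Eis.im hpcomp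
    rw [hpim] at him
    rw [h'.1, h'.2] at him
    simp [Eis.mul_im] at him
    exact ⟨6, by linarith [him]⟩
  · exfalso
    apply hbad
    have him := congrArg Eis.im hpcomp
    rw [hpim] at him
    rw [h'.1, h'.2] at him
    simp [Eis.mul_im] at him
    exact ⟨-6, by linarith [him]⟩

lemma solve_eis (a b X : ℤ) (hre : X + 9 = a^3 + b^3 - 3*a*b^2)
    (him : (18:ℤ) = 3*a^2*b - 3*a*b^2) : X = 10 ∨ X = -10 := by
  have h3t : (18:ℤ) = 3*(a*(b*(a-b))) := by linear_combination him
  have h6 : (6:ℤ) = a*(b*(a-b)) := by linarith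
  have h6' : (6:ℤ) = b*(a*(a-b)) := by linarith [h6]; 
  have ha : a ∣ 6 := ⟨b*(a-b), h6⟩
  have hb : b ∣ 6 := ⟨a*(a-b), h6'⟩
  have ha1 : a ≤ 6 := Int.le_of_dvd (by norm_num) ha
  have ha2 : -6 ≤ a := by
    have := Int.le_of_dvd (show (0:ℤ) < 6 by norm_num) ((neg_dvd).2 ha); linarith
  have hb1 : b ≤ 6 := Int.le_of_dvd (by norm_num) hb
  have hb2 : -6 ≤ b := by
    have := Int.le_of_dvd (show (0:ℤ) < 6 by norm_num) ((neg_dvd).2 hb); linarith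
  interval_cases a <;> interval_cases b <;> (try norm_num at him) <;> omega


open Zsqrtd

lemma gauss_key (x m y : ℤ) (h : x^2 + m^2 = y^3) (hcop : IsCoprime (y^3) (4*m^2)) :
    ∃ a b : ℤ, x = a^3 - 3*a*b^2 ∧ m = 3*a^2*b - b^3 := by
  classical
  letI : GCDMonoid GaussianInt := EuclideanDomain.gcdMonoid _
  set p : GaussianInt := ⟨x, m⟩ with hp
  set q : GaussianInt := ⟨x, -m⟩ with hq
  have hcast : ∀ n : ℤ, ((n : ℤ) : GaussianInt) = ⟨n, 0⟩ := fun n => by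
    ext <;> simp
  have hmul0 : p * q = (⟨x^2 + m^2, 0⟩ : GaussianInt) := by
    ext
    · simp [hp, hq, Zsqrtd.re_mul]; ring
    · simp [hp, hq, Zsqrtd.im_mul]; ring
  have hmul : p * q = ((y : GaussianInt))^3 := by
    rw [hmul0, h, ← hcast]; push_cast; ring
  have hco : IsCoprime p q := by
    obtain ⟨s, t, hst⟩ := hcop
    refine ⟨(s:GaussianInt) * q - (t:GaussianInt) * (p - q), (t:GaussianInt) * (p - q), ?_⟩
    have h2 : (p-q)*(p-q) = (⟨-4*m^2, 0⟩ : GaussianInt) := by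
      ext
      · simp [hp, hq, Zsqrtd.re_sub, Zsqrtd.im_sub, Zsqrtd.re_mul, Zsqrtd.im_mul]; ring
      · simp [hp, hq, Zsqrtd.re_sub, Zsqrtd.im_sub, Zsqrtd.im_mul]
    have key : ((s:GaussianInt) * q - (t:GaussianInt) * (p - q)) * p
        + ((t:GaussianInt) * (p - q)) * q
        = (s:GaussianInt) * (p*q) - (t:GaussianInt) * ((p-q)*(p-q)) := by ring
    rw [key, hmul0, h, h2, ← hcast (y^3), ← hcast (-4*m^2)]
    have hc := congrArg (fun z : ℤ => (z : GaussianInt)) hst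
    push_cast at hc ⊢
    linear_combination hc
  have hgu : IsUnit (gcd p q) := hco.isUnit_of_dvd' (gcd_dvd_left p q) (gcd_dvd_right p q)
  obtain ⟨d, hd⟩ := exists_associated_pow_of_mul_eq_pow hgu hmul
  obtain ⟨u, hu⟩ := hd
  -- hu : d^3 * u = p
  have hun : ((u : GaussianInt)).norm = 1 :=
    (Zsqrtd.norm_eq_one_iff' (by norm_num) _).2 u.isUnit
  rw [Zsqrtd.norm_def] at hun
  set a0 : ℤ := (u : GaussianInt).re with ha0
  set b0 : ℤ := (u : GaussianInt).im with hb0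
  have hun' : a0*a0 + b0*b0 = 1 := by linarith [hun]
  have ha1 : -1 ≤ a0 ∧ a0 ≤ 1 := by constructor <;> nlinarith [mul_self_nonneg b0]
  have hb1 : -1 ≤ b0 ∧ b0 ≤ 1 := by constructor <;> nlinarith [mul_self_nonneg a0]
  have huv : (u : GaussianInt) = ⟨a0, b0⟩ := rfl
  have main : ∀ c : GaussianInt, p = c^3 → ∃ a b : ℤ, x = a^3 - 3*a*b^2 ∧ m = 3*a^2*b - b^3 := by
    intro c hc
    refine ⟨c.re, c.im, ?_, ?_⟩
    · have := congrArg Zsqrtd.re hc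
      simp [hp, pow_succ, Zsqrtd.re_mul, Zsqrtd.im_mul] at this
      linarith [this]
    · have := congrArg Zsqrtd.im hc
      simp [hp, pow_succ, Zsqrtd.re_mul, Zsqrtd.im_mul] at this
      linarith [this]
  have hcube : ∀ v : GaussianInt, v^3 = (u : GaussianInt) → p = (v*d)^3 := by
    intro v hv
    rw [← hu, ← hv]; ring
  have hcases : (a0 = 1 ∧ b0 = 0) ∨ (a0 = -1 ∧ b0 = 0) ∨ (a0 = 0 ∧ b0 = 1) ∨ (a0 = 0 ∧ b0 = -1) := by
    rcases ha1 with ⟨ha2, ha3⟩; rcases hb1 with ⟨hb2, hb3⟩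
    interval_cases a0 <;> interval_cases b0 <;> omega
  rcases hcases with h' | h' | h' | h'
  · refine main _ (hcube 1 ?_)
    rw [huv, h'.1, h'.2]
    have : (⟨1,0⟩ : GaussianInt) = 1 := by ext <;> simp
    rw [this]; norm_num
  · refine main _ (hcube (-1) ?_)
    rw [huv, h'.1, h'.2]
    have : (⟨-1,0⟩ : GaussianInt) = -1 := by ext <;> simp
    rw [this]; norm_num
  · refine main _ (hcube ⟨0,-1⟩ ?_)
    rw [huv, h'.1, h'.2]
    ext <;> simp [pow_succ, Zsqrtd.re_mul, Zsqrtd.im_mul]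
  · refine main _ (hcube ⟨0,1⟩ ?_)
    rw [huv, h'.1, h'.2]
    ext <;> simp [pow_succ, Zsqrtd.re_mul, Zsqrtd.im_mul]

lemma sq_mod8 (x : ℕ) : x^2 % 8 = 0 ∨ x^2 % 8 = 1 ∨ x^2 % 8 = 4 := by
  obtain ⟨q, r, hr, rfl⟩ : ∃ q r, r < 4 ∧ x = 4*q + r :=
    ⟨x/4, x%4, Nat.mod_lt _ (by norm_num), by omega⟩
  have h : (4*q+r)^2 = 8*(2*q*q + q*r) + r^2 := by ring
  rw [h]
  interval_cases r <;> omega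

lemma y_odd (x y c : ℕ) (hc : c % 8 = 1 ∨ c % 8 = 3) (heq : x^2 + c = y^3) : y % 2 = 1 := by
  by_contra h
  obtain ⟨m, rfl⟩ : ∃ m, y = 2*m := ⟨y/2, by omega⟩
  have h3 : (2*m)^3 = 8*(m*m*m) := by ring
  rw [h3] at heq
  rcases sq_mod8 x with h' | h' | h' <;> omega

-- solve 1 = 3 a^2 b - b^3
lemma solve1 (a b : ℤ) (hm : (1:ℤ) = 3*a^2*b - b^3) : a = 0 ∧ b = -1 := by
  have hb : b ∣ 1 := ⟨3*a^2 - b^2, by linear_combination hm⟩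
  have hk0 : 0 ≤ a^2 := sq_nonneg a
  obtain ⟨k, hk1, hk2⟩ : ∃ k : ℤ, 0 ≤ k ∧ k = a^2 := ⟨a^2, hk0, rfl⟩
  rcases Int.isUnit_iff.1 (isUnit_of_dvd_one hb) with rfl | rfl
  · exfalso
    have h2 : 3*k = 2 := by rw [hk2]; linarith
    omega
  · have : 3*a^2 = 0 := by linarith
    have ha : a^2 = 0 := by linarith [sq_nonneg a]
    exact ⟨pow_eq_zero_iff (two_ne_zero) |>.1 ha, rfl⟩

lemma solve3 (a b : ℤ) (hm : (3:ℤ) = 3*a^2*b - b^3) : False := by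
  have hb : b ∣ 3 := ⟨3*a^2 - b^2, by linear_combination hm⟩
  have hb1 : b ≤ 3 := Int.le_of_dvd (by norm_num) hb
  have hb2 : -3 ≤ b := by
    have := Int.le_of_dvd (show (0:ℤ) < 3 by norm_num) ((neg_dvd).2 hb); linarith
  obtain ⟨k, hk1, hk2⟩ : ∃ k : ℤ, 0 ≤ k ∧ (3:ℤ) = 3*k*b - b^3 := ⟨a^2, sq_nonneg a, hm⟩
  interval_cases b <;> omega

lemma solve9 (a b : ℤ) (hm : (9:ℤ) = 3*a^2*b - b^3) : b = 3 ∧ (a = 2 ∨ a = -2) := by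
  have hb : b ∣ 9 := ⟨3*a^2 - b^2, by linear_combination hm⟩
  have hb1 : b ≤ 9 := Int.le_of_dvd (by norm_num) hb
  have hb2 : -9 ≤ b := by
    have := Int.le_of_dvd (show (0:ℤ) < 9 by norm_num) ((neg_dvd).2 hb); linarith
  obtain ⟨k, hk1, hk2, hka⟩ : ∃ k : ℤ, 0 ≤ k ∧ (9:ℤ) = 3*k*b - b^3 ∧ k = a^2 :=
    ⟨a^2, sq_nonneg a, hm, rfl⟩
  interval_cases b <;> try omega
  · -- b = -3
    exfalso
    have h2 : a^2 = 2 := by rw [← hka]; omega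
    have ha1 : a ≤ 1 := by nlinarith [sq_nonneg (a-1)]
    have ha2 : -1 ≤ a := by nlinarith [sq_nonneg (a+1)]
    interval_cases a <;> norm_num at h2
  · -- b = 3
    have h4 : a^2 = 4 := by rw [← hka]; omega
    have ha1 : a ≤ 2 := by nlinarith [sq_nonneg (a-2)]
    have ha2 : -2 ≤ a := by nlinarith [sq_nonneg (a+2)]
    refine ⟨rfl, ?_⟩
    interval_cases a <;> first | omega | (exfalso; norm_num at h4)

lemma exists_prime_mod4 (n : ℕ) (h : n % 4 = 3) : ∃ p, p.Prime ∧ p ∣ n ∧ p % 4 = 3 := by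
  induction n using Nat.strong_induction_on with
  | _ n ih =>
    by_cases hp : n.Prime
    · exact ⟨n, hp, dvd_refl n, h⟩
    · have h2 : 2 ≤ n := by omega
      obtain ⟨m, hmn, hm2, hmlt⟩ := Nat.exists_dvd_of_not_prime2 h2 hp
      obtain ⟨k, rfl⟩ := hmn
      have hk1 : 1 ≤ k := by
        rcases Nat.eq_zero_or_pos k with rfl | h' ; · omega
        · omega
      have hklt : k < m * k := by nlinarith
      have hmod : m % 4 = 3 ∨ k % 4 = 3 := by
        have h1 : (m % 4) * (k % 4) % 4 = 3 := by rw [← Nat.mul_mod]; exact h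
        have hm4 : m % 4 < 4 := Nat.mod_lt _ (by norm_num)
        have hk4 : k % 4 < 4 := Nat.mod_lt _ (by norm_num)
        obtain ⟨a, ha⟩ : ∃ a, a = m % 4 := ⟨_, rfl⟩
        obtain ⟨b, hb⟩ : ∃ b, b = k % 4 := ⟨_, rfl⟩
        rw [← ha, ← hb] at h1 ⊢
        rw [← ha] at hm4; rw [← hb] at hk4
        interval_cases a <;> interval_cases b <;> omega
      rcases hmod with h3 | h3
      · obtain ⟨p, hp1, hp2, hp3⟩ := ih m hmlt h3
        exact ⟨p, hp1, hp2.trans (dvd_mul_right m k), hp3⟩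
      · obtain ⟨p, hp1, hp2, hp3⟩ := ih k hklt h3
        exact ⟨p, hp1, hp2.trans (dvd_mul_left k m), hp3⟩

lemma odd_sq_mod8 (x : ℕ) (h : x % 2 = 1) : x^2 % 8 = 1 := by
  obtain ⟨q, r, hr, h2, rfl⟩ : ∃ q r, r < 4 ∧ r % 2 = 1 ∧ x = 4*q + r :=
    ⟨x/4, x%4, Nat.mod_lt _ (by norm_num), by omega, by omega⟩
  have h : (4*q+r)^2 = 8*(2*q*q + q*r) + r^2 := by ring
  rw [h]
  interval_cases r <;> omega

lemma case1 (x y : ℕ) (hx : 0 < x) (heq : x^2 + 3 = y^3) : False := by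
  have hy1 : y % 2 = 1 := y_odd x y 3 (by norm_num) heq
  have hy3odd : y^3 % 2 = 1 := Nat.odd_iff.1 ((Nat.odd_iff.2 hy1).pow)
  have hx2 : x % 2 = 0 := by
    by_contra hodd
    have h1 : x^2 % 8 = 1 := odd_sq_mod8 x (by omega)
    omega
  have hy4 : y % 4 = 3 := by
    by_contra hne
    obtain ⟨k, rfl⟩ : ∃ k, y = 4*k+1 := ⟨y/4, by omega⟩
    obtain ⟨u, rfl⟩ : ∃ u, x = 2*u := ⟨x/2, by omega⟩
    have e1 : (4*k+1)^3 = 4*(16*k^3+12*k^2+3*k)+1 := by ring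
    have e2 : (2*u)^2 = 4*u^2 := by ring
    omega
  obtain ⟨n, rfl⟩ : ∃ n, y = n+1 := ⟨y-1, by omega⟩
  have hdvd : (n^2+n+1) ∣ x^2 + 4 := by
    refine ⟨n+2, ?_⟩
    have e : (n+1)^3 + 1 = (n^2+n+1)*(n+2) := by ring
    omega
  have hA4 : (n^2+n+1) % 4 = 3 := by
    obtain ⟨k, rfl⟩ : ∃ k, n = 4*k+2 := ⟨n/4, by omega⟩
    have e : (4*k+2)^2 + (4*k+2) + 1 = 4*(4*k*k+5*k+1) + 3 := by ring
    omega
  obtain ⟨p, hp, hpA, hp4⟩ := exists_prime_mod4 _ hA4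
  have hpdvd : p ∣ x^2 + 4 := hpA.trans hdvd
  haveI : Fact p.Prime := ⟨hp⟩
  have hpx : ¬ p ∣ x := by
    intro hdx
    have h4 : p ∣ 4 := (Nat.dvd_add_right (hdx.pow (by norm_num))).1 hpdvd
    have := Nat.le_of_dvd (by norm_num) h4
    have hp3 : p = 3 := by omega
    rw [hp3] at h4
    omega
  have hsq : IsSquare (-1 : ZMod p) := by
    have hx2' : (x:ZMod p)^2 + 4 = 0 := by
      have h0 : ((x^2 + 4 : ℕ) : ZMod p) = 0 := (ZMod.natCast_eq_zero_iff _ _).2 hpdvd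
      push_cast at h0
      linear_combination h0
    have h2ne : (2:ZMod p) ≠ 0 := by
      intro h0
      have : ((2:ℕ) : ZMod p) = 0 := by push_cast; exact h0
      rw [ZMod.natCast_eq_zero_iff] at this
      have := Nat.le_of_dvd (by norm_num) this
      omega
    refine ⟨(x:ZMod p) * 2⁻¹, ?_⟩
    have h22 : (2:ZMod p) * 2⁻¹ = 1 := mul_inv_cancel₀ h2ne
    linear_combination (-(2⁻¹ * 2⁻¹) : ZMod p) * hx2' + ((2:ZMod p)*2⁻¹ + 1) * h22
  rw [ZMod.exists_sq_eq_neg_one_iff] at hsq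
  exact hsq hp4

lemma case3 (x y : ℕ) (hx : 0 < x) (hgcd : Nat.gcd x y = 1) (heq : x^2 + 27 = y^3) :
    False := by
  have h3y : ¬ (3 ∣ y) := by
    intro h
    obtain ⟨k, hk⟩ := dvd_pow h (three_ne_zero)
    have h3x2 : 3 ∣ x^2 := by omega
    have h3x : 3 ∣ x := Nat.Prime.dvd_of_dvd_pow Nat.prime_three h3x2
    have h3g : 3 ∣ Nat.gcd x y := Nat.dvd_gcd h3x h
    omega
  have hy4 : 4 ≤ y := by
    by_contra h
    interval_cases y <;> simp_all <;> omega
  have hy456 : y = 4 ∨ y = 5 ∨ 6 ≤ y := by omega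
  rcases hy456 with rfl | rfl | hy6
  · have hxb : x ≤ 6 := by
      by_contra h
      have : 7^2 ≤ x^2 := Nat.pow_le_pow_left (by omega) 2
      omega
    interval_cases x <;> norm_num at heq
  · have hxb : x ≤ 9 := by
      by_contra h
      have : 10^2 ≤ x^2 := Nat.pow_le_pow_left (by omega) 2
      omega
    interval_cases x <;> norm_num at heq
  -- main case y ≥ 6
  have hYy : (6:ℤ) ≤ (y:ℤ) := by exact_mod_cast hy6
  have heqZ : (x:ℤ)^2 + 27 = (y:ℤ)^3 := by exact_mod_cast heq
  have hXsq : ((y:ℤ)^2+3*(y:ℤ)+9) * ((y:ℤ)-3) = (x:ℤ)^2 := by linear_combination -heqZ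
  have hco : IsCoprime ((y:ℤ)^2+3*(y:ℤ)+9) ((y:ℤ)-3) := by
    rw [Int.isCoprime_iff_gcd_eq_one]
    set g := Int.gcd ((y:ℤ)^2+3*(y:ℤ)+9) ((y:ℤ)-3) with hg
    have hg1 : (g:ℤ) ∣ ((y:ℤ)^2+3*(y:ℤ)+9) := Int.gcd_dvd_left _ _
    have hg2 : (g:ℤ) ∣ ((y:ℤ)-3) := Int.gcd_dvd_right _ _
    have hg27 : (g:ℤ) ∣ 27 := by
      have h27 : (27:ℤ) = ((y:ℤ)^2+3*(y:ℤ)+9) - ((y:ℤ)-3)*((y:ℤ)+6) := by ring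
      rw [h27]
      exact dvd_sub hg1 (hg2.mul_right _)
    have hg27' : g ∣ 27 := by exact_mod_cast hg27
    obtain ⟨i, hi3, hgi⟩ := (Nat.dvd_prime_pow Nat.prime_three).1 (by exact_mod_cast hg27' : g ∣ 3^3)
    rcases Nat.eq_zero_or_pos i with rfl | hip
    · simpa using hgi
    · exfalso
      have h3g : (3:ℤ) ∣ (g:ℤ) := by
        rw [hgi]; push_cast
        exact dvd_pow_self 3 (by omega)
      have h3A : (3:ℤ) ∣ (y:ℤ)^2+3*(y:ℤ)+9 := h3g.trans hg1
      have h3Y2 : (3:ℤ) ∣ (y:ℤ)^2 := by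
        obtain ⟨c, hc⟩ := h3A
        exact ⟨c - (y:ℤ) - 3, by linarith⟩
      have h3y2 : (3:ℕ) ∣ y^2 := by
        rw [← Int.natCast_dvd_natCast]; push_cast; exact h3Y2
      exact h3y (Nat.Prime.dvd_of_dvd_pow Nat.prime_three h3y2)
  obtain ⟨r, hr | hr⟩ := Int.sq_of_isCoprime hco hXsq
  · have h1 : ((y:ℤ)+1)^2 < r^2 := by nlinarith
    have h2 : r^2 < ((y:ℤ)+2)^2 := by nlinarith
    rcases le_or_gt |r| ((y:ℤ)+1) with h | h
    · have : r^2 ≤ ((y:ℤ)+1)^2 := by nlinarith [sq_abs r, abs_nonneg r]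
      omega
    · have : ((y:ℤ)+2)^2 ≤ r^2 := by nlinarith [sq_abs r, abs_nonneg r]
      omega
  · nlinarith [sq_nonneg r]

lemma case0 (x y : ℕ) (hx : 0 < x) (heq : x^2 + 1 = y^3) : False := by
  have hy1 : y % 2 = 1 := y_odd x y 1 (by norm_num) heq
  have hcop : IsCoprime ((y:ℤ)^3) (4*(1:ℤ)^2) := by
    have h2 : Nat.Coprime y 2 :=
      Nat.coprime_comm.1 ((Nat.prime_two.coprime_iff_not_dvd).2 (by omega))
    have h2' := Nat.isCoprime_iff_coprime.2 h2
    have h4 : (4*(1:ℤ)^2) = 2^2 := by norm_num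
    rw [h4]
    exact h2'.pow
  have heqZ : (x:ℤ)^2 + 1^2 = (y:ℤ)^3 := by
    have : (x:ℤ)^2 + 1 = (y:ℤ)^3 := by exact_mod_cast heq
    linarith [this]
  obtain ⟨a, b, hxv, hmv⟩ := gauss_key x 1 y heqZ hcop
  obtain ⟨ha, hb⟩ := solve1 a b hmv
  rw [ha] at hxv
  norm_num at hxv
  omega

lemma not_three_dvd_y (x y c : ℕ) (hgcd : Nat.gcd x y = 1) (h3c : 3 ∣ c)
    (heq : x^2 + c = y^3) : ¬ 3 ∣ y := by
  intro h
  obtain ⟨k, hk⟩ := dvd_pow h (three_ne_zero)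
  obtain ⟨j, hj⟩ := h3c
  have h3x2 : 3 ∣ x^2 := by omega
  have h3x : 3 ∣ x := Nat.Prime.dvd_of_dvd_pow Nat.prime_three h3x2
  have h3g : 3 ∣ Nat.gcd x y := Nat.dvd_gcd h3x h
  omega

lemma case2 (x y : ℕ) (hx : 0 < x) (hgcd : Nat.gcd x y = 1) (heq : x^2 + 9 = y^3) :
    False := by
  have hy1 : y % 2 = 1 := y_odd x y 9 (by norm_num) heq
  have h3y : ¬ 3 ∣ y := not_three_dvd_y x y 9 hgcd (by norm_num) heq
  have hcop : IsCoprime ((y:ℤ)^3) (4*(3:ℤ)^2) := by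
    have h2 : Nat.Coprime y 6 := Nat.Coprime.mul_right
      (Nat.coprime_comm.1 ((Nat.prime_two.coprime_iff_not_dvd).2 (by omega)))
      (Nat.coprime_comm.1 ((Nat.prime_three.coprime_iff_not_dvd).2 h3y))
    have h2' := Nat.isCoprime_iff_coprime.2 h2
    have h4 : (4*(3:ℤ)^2) = 6^2 := by norm_num
    rw [h4]
    exact_mod_cast h2'.pow
  have heqZ : (x:ℤ)^2 + 3^2 = (y:ℤ)^3 := by
    have : (x:ℤ)^2 + 9 = (y:ℤ)^3 := by exact_mod_cast heq
    linarith [this]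
  obtain ⟨a, b, hxv, hmv⟩ := gauss_key x 3 y heqZ hcop
  exact solve3 a b hmv

lemma case4 (x y : ℕ) (hx : 0 < x) (hgcd : Nat.gcd x y = 1) (heq : x^2 + 81 = y^3) :
    x = 46 ∧ y = 13 := by
  have hy1 : y % 2 = 1 := y_odd x y 81 (by norm_num) heq
  have h3y : ¬ 3 ∣ y := not_three_dvd_y x y 81 hgcd (by norm_num) heq
  have hcop : IsCoprime ((y:ℤ)^3) (4*(9:ℤ)^2) := by
    have h2 : Nat.Coprime y 18 := Nat.Coprime.mul_right
      (Nat.coprime_comm.1 ((Nat.prime_two.coprime_iff_not_dvd).2 (by omega)))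
      (Nat.Coprime.mul_right
        (Nat.coprime_comm.1 ((Nat.prime_three.coprime_iff_not_dvd).2 h3y))
        (Nat.coprime_comm.1 ((Nat.prime_three.coprime_iff_not_dvd).2 h3y)))
    have h2' := Nat.isCoprime_iff_coprime.2 h2
    have h4 : (4*(9:ℤ)^2) = 18^2 := by norm_num
    rw [h4]
    exact_mod_cast h2'.pow
  have heqZ : (x:ℤ)^2 + 9^2 = (y:ℤ)^3 := by
    have : (x:ℤ)^2 + 81 = (y:ℤ)^3 := by exact_mod_cast heq
    linarith [this]
  obtain ⟨a, b, hxv, hmv⟩ := gauss_key x 9 y heqZ hcop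
  obtain ⟨hb, ha | ha⟩ := solve9 a b hmv
  · rw [ha, hb] at hxv
    norm_num at hxv
    omega
  · rw [ha, hb] at hxv
    norm_num at hxv
    have hx46 : x = 46 := by omega
    subst hx46
    have hy3 : y^3 = 13^3 := by norm_num at heq ⊢; omega
    exact ⟨rfl, Nat.pow_left_injective (by norm_num) hy3⟩
lemma case5 (x y : ℕ) (hx : 0 < x) (hgcd : Nat.gcd x y = 1) (heq : x^2 + 243 = y^3) :
    x = 10 ∧ y = 7 := by
  have hy1 : y % 2 = 1 := y_odd x y 243 (by norm_num) heq
  have h3y : ¬ 3 ∣ y := not_three_dvd_y x y 243 hgcd (by norm_num) heq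
  have hcop : IsCoprime ((y:ℤ)^3) (972:ℤ) := by
    have c2 : Nat.Coprime y 2 :=
      Nat.coprime_comm.1 ((Nat.prime_two.coprime_iff_not_dvd).2 (by omega))
    have c3 : Nat.Coprime y 3 :=
      Nat.coprime_comm.1 ((Nat.prime_three.coprime_iff_not_dvd).2 h3y)
    have c972 : Nat.Coprime y 972 := by
      have : (972 : ℕ) = 2^2 * 3^5 := by norm_num
      rw [this]
      exact Nat.Coprime.mul_right (c2.pow_right 2) (c3.pow_right 5)
    have h' := Nat.isCoprime_iff_coprime.2 c972
    have h'' : IsCoprime ((y:ℤ)) (972:ℤ) := by exact_mod_cast h'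
    exact h''.pow_left
  have h3yZ : ¬ (3:ℤ) ∣ (y:ℤ) := by
    intro hh
    exact h3y (by exact_mod_cast hh)
  have heqZ : (x:ℤ)^2 + 243 = (y:ℤ)^3 := by exact_mod_cast heq
  obtain ⟨a, b, hre, him⟩ := eis_key x y heqZ hcop h3yZ
  rcases solve_eis a b x hre him with h10 | h10
  · have hx10 : x = 10 := by exact_mod_cast h10
    subst hx10
    refine ⟨rfl, ?_⟩
    have hy3 : y^3 = 7^3 := by norm_num at heq ⊢; omega
    exact Nat.pow_left_injective (by norm_num) hy3
  · exfalso
    omega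

theorem stmt17 (x y α : ℕ) (hx : 0 < x) (hy : 0 < y)
    (hgcd : Nat.gcd x y = 1) (hα : α ≤ 5)
    (heq : x^2 + 3^α * 113^0 = y^3) :
    (x = 46 ∧ y = 13 ∧ α = 4) ∨ (x = 10 ∧ y = 7 ∧ α = 5) := by
  interval_cases α <;> norm_num at heq
  · exact (case0 x y hx heq).elim
  · exact (case1 x y hx heq).elim
  · exact (case2 x y hx hgcd heq).elim
  · exact (case3 x y hx hgcd heq).elim
  · obtain ⟨h1, h2⟩ := case4 x y hx hgcd heq
    exact Or.inl ⟨h1, h2, rfl⟩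
  · obtain ⟨h1, h2⟩ := case5 x y hx hgcd heq
    exact Or.inr ⟨h1, h2, rfl⟩
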